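/- Assume A is a unique factorization domain. If f ∈ Δ(B), then fⁿ ∈ Δ(B) for every integer n ≥ 0. -/

import Mathlib

/-- `f ∈ Δ(B)`: `f` is nonzero and has no real divisor with respect to the
real form `A ⊆ B`: whenever `f ∈ rB` with `r ∈ A` nonzero, `r` is a unit of `A`. -/
def Delta {B : Type} [CommRing B] (A : Subring B) (f : B) : Prop :=
  f ≠ 0 ∧ ∀ r : A, (r : B) ≠ 0 → (r : B) ∣ f → IsUnit r

section Aux

variable {B : Type} [CommRing B] [IsDomain B] [Algebra ℂ B]
    [Algebra ℝ B] [IsScalarTower ℝ ℂ B] (A : Subring B)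
    (hdecomp : ∀ b : B, ∃! p : ↥A × ↥A,
      b = (p.1 : B) + algebraMap ℂ B Complex.I * (p.2 : B))

include hdecomp in
/-- divisibility by a real element transfers to components -/
theorem dvd_components (r a c : A)
    (h : (r : B) ∣ ((a : B) + algebraMap ℂ B Complex.I * (c : B))) :
    r ∣ a ∧ r ∣ c := by
  obtain ⟨s, hs⟩ := h
  obtain ⟨⟨a', c'⟩, hs', _⟩ := hdecomp s
  have key : ((a : B) + algebraMap ℂ B Complex.I * (c : B))
      = ((r * a' : A) : B) + algebraMap ℂ B Complex.I * ((r * c' : A) : B) := by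
    push_cast
    rw [hs, hs']; ring
  obtain ⟨w, hw, huniq⟩ := hdecomp ((a : B) + algebraMap ℂ B Complex.I * (c : B))
  have ha := huniq (a, c) rfl
  have hb := huniq (r * a', r * c') key
  have e1 : ((a, c) : A × A) = (r * a', r * c') := by rw [ha, hb]
  rw [Prod.ext_iff] at e1
  exact ⟨⟨a', e1.1⟩, ⟨c', e1.2⟩⟩

theorem i_sq : (algebraMap ℂ B Complex.I) ^ 2 = -1 := by
  rw [← map_pow, Complex.I_sq, map_neg, map_one]

theorem two_unit (hRmem : ∀ r : ℝ, algebraMap ℝ B r ∈ A) : IsUnit (2 : A) := by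
  refine IsUnit.of_mul_eq_one (a := (2 : A)) ⟨algebraMap ℝ B (2⁻¹), hRmem _⟩ ?_
  apply Subtype.ext
  show ((2 : A) : B) * algebraMap ℝ B 2⁻¹ = 1
  have h2 : ((2 : A) : B) = algebraMap ℝ B 2 := by rw [map_ofNat]; norm_cast
  rw [h2, ← map_mul]
  norm_num

include hdecomp in
/-- from `p ∣ x ^ 2` in `B`, `p` a prime of `A`, deduce `p ∣ x`. -/
theorem prime_dvd_sq (hRmem : ∀ r : ℝ, algebraMap ℝ B r ∈ A) (p : A) (hp : Prime p)
    (x : B) (h : (p : B) ∣ x ^ 2) : (p : B) ∣ x := by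
  obtain ⟨⟨a, c⟩, hx, _⟩ := hdecomp x
  have hsq : x ^ 2 = ((a ^ 2 - c ^ 2 : A) : B)
      + algebraMap ℂ B Complex.I * ((a * c + a * c : A) : B) := by
    rw [hx]
    have h2 : (algebraMap ℂ B Complex.I) ^ 2 = -1 := i_sq
    push_cast
    ring_nf
    rw [h2]
    ring
  rw [hsq] at h
  obtain ⟨hd1, hd2⟩ := dvd_components A hdecomp p _ _ h
  have hac : p ∣ a * c := by
    have he : a * c + a * c = 2 * (a * c) := by ring
    rw [he] at hd2
    exact ((two_unit A hRmem).dvd_mul_left).mp hd2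
  have hboth : p ∣ a ∧ p ∣ c := by
    rcases hp.dvd_or_dvd hac with h | h
    · refine ⟨h, ?_⟩
      have : p ∣ c ^ 2 := by
        have : p ∣ a ^ 2 := by rw [sq]; exact h.mul_right _
        have := dvd_sub this hd1
        simpa using this
      exact hp.dvd_of_dvd_pow this
    · refine ⟨?_, h⟩
      have : p ∣ a ^ 2 := by
        have : p ∣ c ^ 2 := by rw [sq]; exact h.mul_right _
        have := dvd_add hd1 this
        simpa using this
      exact hp.dvd_of_dvd_pow this
  rw [hx]
  refine dvd_add ?_ (Dvd.dvd.mul_left ?_ _)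
  · exact_mod_cast (Subring.subtype A).map_dvd hboth.1
  · exact_mod_cast (Subring.subtype A).map_dvd hboth.2

include hdecomp in
/-- descent: `p ∣ f ^ m` implies `p ∣ f` for `m ≥ 1`. -/
theorem prime_dvd_pow_descent (hRmem : ∀ r : ℝ, algebraMap ℝ B r ∈ A)
    (p : A) (hp : Prime p) (f : B) :
    ∀ m : ℕ, m ≠ 0 → (p : B) ∣ f ^ m → (p : B) ∣ f := by
  intro m
  induction m using Nat.strong_induction_on with
  | _ m ih =>
    intro hm hdvd
    rcases Nat.lt_or_ge m 2 with h2 | h2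
    · interval_cases m
      · exact absurd rfl hm
      · simpa using hdvd
    · set k := (m + 1) / 2 with hk
      have hk1 : 1 ≤ k := Nat.one_le_div_iff (by norm_num) |>.mpr (by omega)
      have hklt : k < m := by omega
      have h2k : m ≤ 2 * k := by omega
      have : (p : B) ∣ (f ^ k) ^ 2 := by
        rw [← pow_mul, mul_comm, ← Nat.sub_add_cancel h2k, pow_add]
        exact Dvd.dvd.mul_left hdvd _
      exact ih k hklt (by omega) (prime_dvd_sq A hdecomp hRmem p hp _ this)

end Aux

/-- Let `A` be a Noetherian integral `ℝ`-domain in which `ℝ` is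
algebraically closed and `B = ℂ ⊗ℝ A` an integral domain (so `B = A ⊕ iA`), and
assume `A` is a UFD.  If `f ∈ Δ(B)`, then `fⁿ ∈ Δ(B)` for every integer `n ≥ 0`. -/
theorem pow_mem_Delta (B : Type) [CommRing B] [IsDomain B] [Algebra ℂ B]
    [Algebra ℝ B] [IsScalarTower ℝ ℂ B] (A : Subring B)
    (hRmem : ∀ r : ℝ, algebraMap ℝ B r ∈ A)
    (hNoeth : IsNoetherianRing ↥A)
    (halgclosed : ∀ a ∈ A, IsAlgebraic ℝ a → ∃ r : ℝ, a = algebraMap ℝ B r)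
    (hdecomp : ∀ b : B, ∃! p : ↥A × ↥A,
      b = (p.1 : B) + algebraMap ℂ B Complex.I * (p.2 : B))
    [UniqueFactorizationMonoid ↥A]
    (f : B) (hf : Delta A f) (n : ℕ) :
    Delta A (f ^ n) := by
  have hone : ∀ r : A, (r : B) ∣ (1 : B) → IsUnit r := by
    intro r hr
    have h1 : (1 : B) = ((1 : A) : B) + algebraMap ℂ B Complex.I * ((0 : A) : B) := by
      push_cast; ring
    rw [h1] at hr
    exact isUnit_of_dvd_one (dvd_components A hdecomp r 1 0 hr).1
  constructor
  · exact pow_ne_zero n hf.1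
  · intro r hr hrd
    rcases eq_or_ne n 0 with rfl | hn
    · exact hone r (by simpa using hrd)
    by_contra hru
    have hr0 : r ≠ 0 := fun h => hr (by rw [h]; rfl)
    obtain ⟨p, hpirr, hpr⟩ := WfDvdMonoid.exists_irreducible_factor hru hr0
    have hp : Prime p := (UniqueFactorizationMonoid.irreducible_iff_prime).mp hpirr
    have hpd : (p : B) ∣ f ^ n := by
      refine dvd_trans ?_ hrd
      exact_mod_cast (Subring.subtype A).map_dvd hpr
    have hpf : (p : B) ∣ f := prime_dvd_pow_descent A hdecomp hRmem p hp f n hn hpd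
    have hp0 : (p : B) ≠ 0 := by
      simpa using (Subtype.coe_ne_coe.mpr hp.ne_zero : (p : B) ≠ ((0 : A) : B))
    exact hp.not_unit (hf.2 p hp0 hpf)
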